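/- Let p ≥ 1 and let C be a real symmetric 2p×2p matrix. If there exists a hermitian structure J on ℝ^{2p} (i.e. a real 2p×2p matrix J with JᵀJ = I and J² = −I) such that JC = CJ, then there exist real numbers ν₁ ≥ ν₂ ≥ … ≥ ν_p such that the characteristic polynomial of C equals ∏_{i=1}^{p} (X − ν_i)²; equivalently, the ordered spectrum of C (its 2p real eigenvalues with multiplicity, in decreasing order) is the doubled list (ν₁, ν₁, ν₂, ν₂, …, ν_p, ν_p). -/

import Mathlib

open Matrix
open Polynomial

lemma eval_charpoly_det {n : Type*} [Fintype n] [DecidableEq n] {R : Type*} [CommRing R]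
    (M : Matrix n n R) (t : R) :
    M.charpoly.eval t = (t • (1 : Matrix n n R) - M).det := by
  rw [Matrix.charpoly, ← Polynomial.coe_evalRingHom, RingHom.map_det]
  congr 1
  ext i j
  by_cases h : i = j
  · subst h
    simp [charmatrix_apply_eq, Matrix.smul_apply, Matrix.one_apply]
  · simp [charmatrix_apply_ne _ _ _ h, Matrix.smul_apply, Matrix.one_apply, h]

lemma skew_det_nonneg {N : ℕ} (A : Matrix (Fin N) (Fin N) ℝ) (h : Aᵀ = -A) :
    0 ≤ A.det := by
  rcases Nat.eq_zero_or_pos N with hN | hN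
  · subst hN; simp
  by_contra hdet
  push_neg at hdet
  set q : Polynomial ℝ := (-A).charpoly with hq
  have hq0 : q.eval 0 = A.det := by
    rw [hq, eval_charpoly_det]; simp
  have hqne : ∀ t : ℝ, t ≠ 0 → q.eval t ≠ 0 := by
    intro t ht hzero
    rw [hq, eval_charpoly_det] at hzero
    have hz : (t • (1 : Matrix (Fin N) (Fin N) ℝ) + A).det = 0 := by
      simpa [sub_neg_eq_add] using hzero
    obtain ⟨v, hv, hveq⟩ := (Matrix.exists_mulVec_eq_zero_iff).2 hz
    have hskewzero : v ⬝ᵥ (A *ᵥ v) = 0 := by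
      have h1 : v ⬝ᵥ (A *ᵥ v) = (v ᵥ* A) ⬝ᵥ v := (Matrix.dotProduct_mulVec v A v)
      have h2 : (v ᵥ* A) = Aᵀ *ᵥ v := (Matrix.mulVec_transpose A v).symm
      have h3 : v ⬝ᵥ (A *ᵥ v) = -((A *ᵥ v) ⬝ᵥ v) := by
        rw [h1, h2, h, Matrix.neg_mulVec, neg_dotProduct]
      have h4 := dotProduct_comm v (A *ᵥ v)
      linarith
    have hexp : v ⬝ᵥ ((t • (1 : Matrix (Fin N) (Fin N) ℝ) + A) *ᵥ v)
        = t * (v ⬝ᵥ v) + v ⬝ᵥ (A *ᵥ v) := by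
      rw [Matrix.add_mulVec, Matrix.smul_mulVec, Matrix.one_mulVec,
        dotProduct_add, dotProduct_smul, smul_eq_mul]
    rw [hveq, dotProduct_zero] at hexp
    rw [hskewzero, add_zero] at hexp
    have hvv : v ⬝ᵥ v = 0 := by
      rcases mul_eq_zero.1 hexp.symm with h' | h'
      · exact absurd h' ht
      · exact h'
    exact hv (dotProduct_self_eq_zero.1 hvv)
  have hmon : q.Monic := Matrix.charpoly_monic (-A)
  have hdeg : q.natDegree = N := by
    rw [hq, Matrix.charpoly_natDegree_eq_dim, Fintype.card_fin]
  have hdegpos : 0 < q.degree := by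
    rw [Polynomial.degree_eq_natDegree hmon.ne_zero, hdeg]
    exact_mod_cast hN
  have htt := Polynomial.tendsto_atTop_of_leadingCoeff_nonneg q hdegpos
    (by rw [hmon.leadingCoeff]; norm_num)
  obtain ⟨b, hb1, hb0⟩ :=
    ((htt.eventually_ge_atTop 1).and (Filter.eventually_ge_atTop (0 : ℝ))).exists
  have hcont : ContinuousOn (fun x => q.eval x) (Set.Icc 0 b) :=
    (Polynomial.continuous q).continuousOn
  have hmem : (0 : ℝ) ∈ Set.Icc (q.eval 0) (q.eval b) := by
    constructor
    · rw [hq0]; linarith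
    · linarith
  obtain ⟨t, htmem, htq⟩ := intermediate_value_Icc hb0 hcont hmem
  have htq' : q.eval t = 0 := htq
  have ht0 : t ≠ 0 := by
    intro h'
    rw [h'] at htq'
    rw [hq0] at htq'
    linarith
  exact hqne t ht0 htq'

lemma hermitian_root_real {n : Type*} [Fintype n] [DecidableEq n]
    (A : Matrix n n ℂ) (hA : Aᴴ = A) {r : ℂ} (hr : A.charpoly.eval r = 0) :
    (r.re : ℂ) = r := by
  rw [eval_charpoly_det] at hr
  obtain ⟨v, hv, hveq⟩ := (Matrix.exists_mulVec_eq_zero_iff).2 hr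
  have hAv : A *ᵥ v = r • v := by
    have : (r • (1 : Matrix n n ℂ) - A) *ᵥ v = r • v - A *ᵥ v := by
      rw [Matrix.sub_mulVec, Matrix.smul_mulVec, Matrix.one_mulVec]
    rw [this] at hveq
    exact (sub_eq_zero.1 hveq).symm
  have s1 : star v ⬝ᵥ (A *ᵥ v) = r * (star v ⬝ᵥ v) := by
    rw [hAv, dotProduct_smul, smul_eq_mul]
  have s2 : star (A *ᵥ v) ⬝ᵥ v = (starRingEnd ℂ) r * (star v ⬝ᵥ v) := by
    rw [hAv, star_smul, smul_dotProduct, smul_eq_mul]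
    rfl
  have s3 : star (A *ᵥ v) ⬝ᵥ v = star v ⬝ᵥ (A *ᵥ v) := by
    rw [Matrix.star_mulVec, hA, ← Matrix.dotProduct_mulVec]
  have hd : star v ⬝ᵥ v ≠ 0 := by
    open ComplexOrder in
    exact fun h => hv (dotProduct_star_self_eq_zero.1 h)
  have hconj : (starRingEnd ℂ) r = r := by
    have := s3.symm.trans s2
    rw [s1] at this
    exact (mul_right_cancel₀ hd this).symm
  exact Complex.conj_eq_iff_re.1 hconj

lemma even_count_of_nonneg (m : Multiset ℝ) (P : Polynomial ℝ)
    (hP : P = (m.map fun s => X - Polynomial.C s).prod)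
    (hnn : ∀ t : ℝ, 0 ≤ P.eval t) (a : ℝ) : Even (m.count a) := by
  by_contra hodd
  have hoddk : Odd (m.count a) := Nat.not_even_iff_odd.1 hodd
  set k := m.count a with hk
  have hsplit : m.filter (· = a) + m.filter (fun x => ¬ x = a) = m :=
    Multiset.filter_add_not _ m
  have hfa : m.filter (· = a) = Multiset.replicate k a := Multiset.filter_eq' m a
  set m' := m.filter (fun x => ¬ x = a) with hm'
  set Q : Polynomial ℝ := (m'.map fun s => X - Polynomial.C s).prod with hQ
  have hfact : P = (X - Polynomial.C a) ^ k * Q := by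
    rw [hP, ← hsplit, hfa, Multiset.map_add, Multiset.prod_add, Multiset.map_replicate,
      Multiset.prod_replicate]
  have hQa : Q.eval a ≠ 0 := by
    rw [hQ, Polynomial.eval_multiset_prod, Multiset.map_map]
    apply Multiset.prod_ne_zero
    intro h0
    obtain ⟨s, hs, hs0⟩ := Multiset.mem_map.1 h0
    have hne : ¬ s = a := (Multiset.mem_filter.1 hs).2
    apply hne
    have : a - s = 0 := by simpa using hs0
    linarith
  have hevalt : ∀ t : ℝ, P.eval t = (t - a) ^ k * Q.eval t := by
    intro t
    rw [hfact, Polynomial.eval_mul, Polynomial.eval_pow, Polynomial.eval_sub,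
      Polynomial.eval_X, Polynomial.eval_C]
  rcases lt_or_gt_of_ne hQa with hneg | hpos
  · -- Q.eval a < 0 : take t slightly to the right
    have hop : IsOpen {t : ℝ | Q.eval t < 0} :=
      isOpen_lt (Polynomial.continuous Q) continuous_const
    obtain ⟨ε, hε, hball⟩ := Metric.isOpen_iff.1 hop a hneg
    set t := a + ε / 2 with ht
    have htball : t ∈ Metric.ball a ε := by
      rw [Metric.mem_ball, Real.dist_eq, ht]
      rw [show a + ε / 2 - a = ε / 2 by ring, abs_of_pos (by linarith)]
      linarith
    have hQt : Q.eval t < 0 := hball htball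
    have hpow : (0 : ℝ) < (t - a) ^ k := by
      apply pow_pos
      rw [ht]; linarith
    have : P.eval t < 0 := by
      rw [hevalt t]
      exact mul_neg_of_pos_of_neg hpow hQt
    linarith [hnn t]
  · -- Q.eval a > 0 : take t slightly to the left
    have hop : IsOpen {t : ℝ | 0 < Q.eval t} :=
      isOpen_lt continuous_const (Polynomial.continuous Q)
    obtain ⟨ε, hε, hball⟩ := Metric.isOpen_iff.1 hop a hpos
    set t := a - ε / 2 with ht
    have htball : t ∈ Metric.ball a ε := by
      rw [Metric.mem_ball, Real.dist_eq, ht]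
      rw [show a - ε / 2 - a = -(ε / 2) by ring, abs_neg, abs_of_pos (by linarith)]
      linarith
    have hQt : 0 < Q.eval t := hball htball
    have hpow : (t - a) ^ k < 0 := by
      apply Odd.pow_neg hoddk
      rw [ht]; linarith
    have : P.eval t < 0 := by
      rw [hevalt t]
      exact mul_neg_of_neg_of_pos hpow hQt
    linarith [hnn t]

/-- If a real symmetric `2p × 2p` matrix `C` commutes with some
hermitian structure `J` (a real matrix with `Jᵀ * J = 1` and `J * J = -1`), then its
characteristic polynomial is of the form `∏ (X - νᵢ)²` for some decreasing reals
`ν₁ ≥ ⋯ ≥ ν_p`, i.e. its ordered spectrum is the doubled list `(ν₁, ν₁, …, ν_p, ν_p)`. -/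
theorem hermitian_commuting_structure_implies_doubled_spectrum
    (p : ℕ) (hp : 1 ≤ p)
    (C : Matrix (Fin (2 * p)) (Fin (2 * p)) ℝ) (hC : C.IsSymm)
    (hJ : ∃ J : Matrix (Fin (2 * p)) (Fin (2 * p)) ℝ,
      Jᵀ * J = 1 ∧ J * J = -1 ∧ J * C = C * J) :
    ∃ ν : Fin p → ℝ, Antitone ν ∧
      C.charpoly = ∏ i : Fin p, (Polynomial.X - Polynomial.C (ν i)) ^ 2 := by
  obtain ⟨J, hJtJ, hJJ, hJC⟩ := hJ
  have hJskew : Jᵀ = -J := by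
    have h1 : J * (-J) = 1 := by rw [mul_neg, hJJ, neg_neg]
    calc Jᵀ = Jᵀ * (J * (-J)) := by rw [h1, mul_one]
    _ = (Jᵀ * J) * (-J) := by rw [mul_assoc]
    _ = -J := by rw [hJtJ, one_mul]
  have hdetJnn : 0 ≤ J.det := skew_det_nonneg J hJskew
  have hdetJsq : J.det * J.det = 1 := by
    rw [← Matrix.det_mul, hJJ]
    rw [show (-1 : Matrix (Fin (2*p)) (Fin (2*p)) ℝ) = (-1 : ℝ) • 1 by simp]
    rw [Matrix.det_smul, Matrix.det_one, Fintype.card_fin]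
    simp [pow_mul]
  have hdetJ : J.det = 1 := by
    rcases mul_self_eq_one_iff.1 hdetJsq with h | h
    · exact h
    · rw [h] at hdetJnn; linarith
  have hnonneg : ∀ t : ℝ, 0 ≤ C.charpoly.eval t := by
    intro t
    rw [eval_charpoly_det]
    have hcomm : J * (t • (1 : Matrix (Fin (2*p)) (Fin (2*p)) ℝ) - C)
        = (t • 1 - C) * J := by
      rw [mul_sub, sub_mul, Matrix.mul_smul, Matrix.smul_mul, mul_one, one_mul, hJC]
    have hskew : ((t • (1 : Matrix (Fin (2*p)) (Fin (2*p)) ℝ) - C) * J)ᵀ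
        = -((t • 1 - C) * J) := by
      rw [Matrix.transpose_mul, hJskew, Matrix.transpose_sub, Matrix.transpose_smul,
        Matrix.transpose_one, hC, neg_mul, hcomm]
    have hd := skew_det_nonneg _ hskew
    rwa [Matrix.det_mul, hdetJ, mul_one] at hd
  -- complexification
  set A : Matrix (Fin (2*p)) (Fin (2*p)) ℂ := C.map Complex.ofRealHom with hA
  have hAherm : Aᴴ = A := by
    ext i j
    simp [hA, Matrix.conjTranspose_apply, Matrix.map_apply, Complex.conj_ofReal,
      hC.apply i j]
  have hmonA : A.charpoly.Monic := Matrix.charpoly_monic A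
  have hsplits : A.charpoly.Splits :=
    IsAlgClosed.splits _
  have hfactA : A.charpoly
      = (A.charpoly.roots.map fun r => Polynomial.X - Polynomial.C r).prod :=
    hsplits.eq_prod_roots_of_monic hmonA
  have hcardroots : A.charpoly.roots.card = 2 * p := by
    rw [Polynomial.splits_iff_card_roots.1 hsplits, Matrix.charpoly_natDegree_eq_dim,
      Fintype.card_fin]
  have hrootsreal : ∀ r ∈ A.charpoly.roots, (Complex.ofReal r.re) = r := by
    intro r hr
    exact hermitian_root_real A hAherm (Polynomial.isRoot_of_mem_roots hr)
  set m : Multiset ℝ := A.charpoly.roots.map Complex.re with hm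
  have hchar : C.charpoly.map Complex.ofRealHom = A.charpoly := by
    rw [hA]; exact (Matrix.charpoly_map C Complex.ofRealHom).symm
  have hCfact : C.charpoly = (m.map fun s => Polynomial.X - Polynomial.C s).prod := by
    apply Polynomial.map_injective (Complex.ofRealHom) Complex.ofReal_injective
    rw [hchar, hfactA, ← Polynomial.coe_mapRingHom, map_multiset_prod, Multiset.map_map,
      hm, Multiset.map_map]
    apply congrArg Multiset.prod
    apply Multiset.map_congr rfl
    intro r hr
    simp only [Function.comp_apply, Polynomial.coe_mapRingHom, Polynomial.map_sub,
      Polynomial.map_X, Polynomial.map_C]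
    rw [show (Complex.ofRealHom (r.re)) = r from hrootsreal r hr]
  have heven : ∀ a ∈ m, 2 ∣ m.count a := fun a _ =>
    (even_count_of_nonneg m C.charpoly hCfact hnonneg a).two_dvd
  obtain ⟨m₀, hm₀⟩ := Multiset.exists_smul_of_dvd_count m heven
  have hmcard : Multiset.card m = 2 * p := by rw [hm, Multiset.card_map]; exact hcardroots
  have hm₀card : Multiset.card m₀ = p := by
    have h2 : 2 * Multiset.card m₀ = 2 * p := by
      rw [← hmcard, hm₀, Multiset.card_nsmul]
    omega
  set l := m₀.sort (· ≤ ·) with hl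
  have hllen : l.length = p := by rw [hl, Multiset.length_sort, hm₀card]
  have hidx : ∀ i : Fin p, p - 1 - i.1 < l.length := by
    intro i; rw [hllen]; omega
  refine ⟨fun i => l.get ⟨p - 1 - i.1, hidx i⟩, ?_, ?_⟩
  · intro i j hij
    apply (Multiset.pairwise_sort m₀ (· ≤ ·)).rel_get_of_le
    have hij' : i.1 ≤ j.1 := hij
    exact Fin.mk_le_mk.2 (by omega)
  · have h2m : m = m₀ + m₀ := by rw [hm₀, two_nsmul]
    have hcoe : (l : Multiset ℝ) = m₀ := Multiset.sort_eq _ _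
    have hprod₀ : (m₀.map fun s => Polynomial.X - Polynomial.C s).prod
        = ∏ i : Fin p, (Polynomial.X - Polynomial.C (l.get ⟨p - 1 - i.1, hidx i⟩)) := by
      rw [← hcoe, Multiset.map_coe, Multiset.prod_coe,
        ← Fin.prod_univ_fun_getElem l (fun s => Polynomial.X - Polynomial.C s)]
      refine Fintype.prod_equiv (Fin.revPerm.trans (finCongr hllen))
        (fun i : Fin l.length => Polynomial.X - Polynomial.C l[(i : ℕ)])
        (fun i : Fin p => Polynomial.X - Polynomial.C (l.get ⟨p - 1 - i.1, hidx i⟩))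
        (fun i => ?_)
      have hidxeq : (⟨p - 1 - ((Fin.revPerm.trans (finCongr hllen)) i).1,
          hidx ((Fin.revPerm.trans (finCongr hllen)) i)⟩ : Fin l.length) = i := by
        apply Fin.ext
        have hi := i.2
        simp only [Equiv.trans_apply, Fin.revPerm_apply, finCongr_apply, Fin.coe_cast,
          Fin.val_rev]
        omega
      beta_reduce
      rw [hidxeq]
      simp [List.get_eq_getElem]
    rw [hCfact, h2m, Multiset.map_add, Multiset.prod_add, hprod₀, Finset.prod_pow, sq]
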